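/- A uniformly discrete set L in a locally compact abelian group G has finite local complexity (for every compact K, the set {(L−x) ∩ K : x ∈ L} is finite) if and only if the difference set L − L is locally finite (has finite intersection with every compact subset of G). -/

import Mathlib

open Pointwise

/-- A uniformly discrete set L in a locally compact abelian group has
finite local complexity iff L − L is locally finite. -/
theorem flc_iff_difference_locally_finite
    {G : Type} [AddCommGroup G] [TopologicalSpace G] [IsTopologicalAddGroup G]
    (L : Set G)
    (hUD : ∃ U ∈ nhds (0 : G), ∀ x ∈ L, ∀ y ∈ L, x - y ∈ U → x = y) :
    (∀ K : Set G, IsCompact K →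
        {P : Set G | ∃ x ∈ L, P = ((fun y => y - x) '' L) ∩ K}.Finite) ↔
    (∀ K : Set G, IsCompact K → ((L - L) ∩ K).Finite) := by
  obtain ⟨U, hU, hsep⟩ := hUD
  obtain ⟨V, hV, hVU⟩ := exists_nhds_zero_half hU
  set W : Set G := V ∩ (-V) with hWdef
  have hW : W ∈ nhds (0 : G) := by
    refine Filter.inter_mem hV ?_
    exact neg_mem_nhds_zero G hV
  have patch_fin : ∀ (x : G) (K : Set G), IsCompact K →
      (((fun y => y - x) '' L) ∩ K).Finite := by
    intro x K hK
    obtain ⟨t, _htK, hcov⟩ := hK.elim_nhds_subcover (fun k => {y | y - k ∈ W})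
      (fun k _ => by
        have : ContinuousAt (fun y => y - k) k := (continuous_sub_right k).continuousAt
        have := this.preimage_mem_nhds (by simpa using hW)
        simpa [Set.preimage] using this)
    have hsub : ((fun y => y - x) '' L) ∩ K ⊆
        ⋃ k ∈ t, (((fun y => y - x) '' L) ∩ {y | y - k ∈ W}) := by
      intro z hz
      obtain ⟨i, hi, hzi⟩ := Set.mem_iUnion₂.mp (hcov hz.2)
      exact Set.mem_iUnion₂.mpr ⟨i, hi, hz.1, hzi⟩
    refine Set.Finite.subset (Set.Finite.biUnion t.finite_toSet ?_) hsub
    intro k _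
    apply Set.Subsingleton.finite
    rintro a ⟨⟨p, hp, rfl⟩, haW⟩ b ⟨⟨q, hq, rfl⟩, hbW⟩
    have hpq : p - q ∈ U := by
      have h1 : p - x - k ∈ V := haW.1
      have h2 : -(q - x - k) ∈ V := by
        have := hbW.2
        simpa using this
      have := hVU _ h1 _ h2
      have heq : (p - x - k) + -(q - x - k) = p - q := by abel
      rwa [heq] at this
    rw [hsep p hp q hq hpq]
  constructor
  · intro hFLC K hK
    have hpat := hFLC K hK
    have hsub : (L - L) ∩ K ⊆
        ⋃₀ {P : Set G | ∃ x ∈ L, P = ((fun y => y - x) '' L) ∩ K} := by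
      rintro z ⟨hzLL, hzK⟩
      obtain ⟨a, ha, b, hb, rfl⟩ := Set.mem_sub.mp hzLL
      exact ⟨((fun y => y - b) '' L) ∩ K, ⟨b, hb, rfl⟩, ⟨a, ha, rfl⟩, hzK⟩
    refine Set.Finite.subset (Set.Finite.sUnion hpat ?_) hsub
    rintro P ⟨x, _hx, rfl⟩
    exact patch_fin x K hK
  · intro hLF K hK
    have hfin := hLF K hK
    have hsub : {P : Set G | ∃ x ∈ L, P = ((fun y => y - x) '' L) ∩ K} ⊆
        {P : Set G | P ⊆ (L - L) ∩ K} := by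
      rintro P ⟨x, hx, rfl⟩ z ⟨⟨p, hp, rfl⟩, hzK⟩
      exact ⟨⟨p, hp, x, hx, rfl⟩, hzK⟩
    exact (Set.Finite.finite_subsets hfin).subset hsub
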